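/- For every odd integer n ≥ 3 and every integer k with 3 ≤ k ≤ n, there exists a k-diagonal magic square of order n. -/

import Mathlib

namespace DMagic

lemma mod_two_cases {n x : ℕ} (hx : x < 2*n) :
    x % n = if n ≤ x then x - n else x := by
  split_ifs with hle
  · rw [Nat.mod_eq_sub_mod hle, Nat.mod_eq_of_lt (by omega)]
  · exact Nat.mod_eq_of_lt (by omega)

lemma mod_eq_of_zmod {n : ℕ} (a b : ℕ) (hab : (a : ZMod n) = b) : a % n = b % n :=
  (ZMod.natCast_eq_natCast_iff a b n).mp hab

lemma Tlem {h : ℕ} (hh : 1 ≤ h) (u : ℕ) (hu : u < 2*h+1) :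
    u + ((u + h) % (2*h+1)) + ((2*(2*h+1) - 1 - 2*u) % (2*h+1)) = 3*h := by
  have h1 := mod_two_cases (n := 2*h+1) (x := u + h) (by omega)
  have h2 := mod_two_cases (n := 2*h+1) (x := 2*(2*h+1) - 1 - 2*u) (by omega)
  split_ifs at h1 h2 <;> omega

variable {n h k : ℕ}

lemma pair_row (hn : n = 2*h+1) (c1 c2 d1 d2 x : ℕ)
    (hc : (c1 : ZMod n) + c2 + 1 = 0) (hd : (d1 : ZMod n) + d2 = 0) :
    (c1 + d1*x) % n + (c2 + d2*x) % n = n - 1 := by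
  set u := (c1 + d1*x) % n with hu
  set v := (c2 + d2*x) % n with hv
  have hun : u < n := Nat.mod_lt _ (by omega)
  have hvn : v < n := Nat.mod_lt _ (by omega)
  have key : (u + v + 1) % n = 0 % n := by
    apply mod_eq_of_zmod
    have e1 : (u : ZMod n) = ((c1 + d1*x : ℕ) : ZMod n) := by rw [hu]; exact ZMod.natCast_mod _ n
    have e2 : (v : ZMod n) = ((c2 + d2*x : ℕ) : ZMod n) := by rw [hv]; exact ZMod.natCast_mod _ n
    push_cast at e1 e2 ⊢
    rw [e1, e2]
    linear_combination hc + (x : ZMod n) * hd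
  rw [Nat.zero_mod] at key
  have := mod_two_cases (n := n) (x := u + v + 1) (by omega)
  split_ifs at this <;> omega

lemma triple_row (hn : n = 2*h+1) (hh : 1 ≤ h) (c1 c2 c3 d1 d2 d3 x : ℕ)
    (hd2 : (d2 : ZMod n) = d1) (hd3 : (d3 : ZMod n) + 2*d1 = 0)
    (hc2 : (c2 : ZMod n) = c1 + h) (hc3 : (c3 : ZMod n) + 2*c1 + 1 = 0) :
    (c1 + d1*x) % n + (c2 + d2*x) % n + (c3 + d3*x) % n = 3*h := by
  set u := (c1 + d1*x) % n with hu
  have hun : u < n := Nat.mod_lt _ (by omega)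
  have e1 : (u : ZMod n) = ((c1 + d1*x : ℕ) : ZMod n) := by rw [hu]; exact ZMod.natCast_mod _ n
  have e2 : (c2 + d2*x) % n = (u + h) % n := by
    apply mod_eq_of_zmod
    push_cast at e1 ⊢
    rw [e1, hc2, hd2]; ring
  have e3 : (c3 + d3*x) % n = (2*n - 1 - 2*u) % n := by
    apply mod_eq_of_zmod
    have hw : (2*n - 1 - 2*u) + (2*u + 1) = 2*n := by omega
    have hwz : ((2*n - 1 - 2*u : ℕ) : ZMod n) = -1 - 2*(u : ZMod n) := by
      have := congrArg (fun m : ℕ => (m : ZMod n)) hw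
      push_cast at this
      have hnz : ((n : ℕ) : ZMod n) = 0 := ZMod.natCast_self n
      linear_combination this + 2 * hnz
    push_cast at e1 ⊢
    rw [hwz, e1]
    linear_combination hc3 + (x : ZMod n) * hd3
  rw [e2, e3, hu]
  subst hn
  exact Tlem hh _ (Nat.mod_lt _ (by omega))

/-! definitions -/

def s0 (k : ℕ) : ℕ := if k % 3 = 0 then 3 else if k % 3 = 1 then 4 else 5

def c3 (h τ : ℕ) : ℕ := if τ = 0 then h else if τ = 1 then 2*h else 0
def d3 (h τ : ℕ) : ℕ := if τ = 1 then 2*h else h + 1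

def fc (h k t : ℕ) : ℕ :=
  if k % 3 = 0 then c3 h t
  else if k % 3 = 1 then (if t = 0 then 0 else if t = 1 then 2*h else if t = 2 then 6*h else 2)
  else (if t = 0 then 0 else if t = 1 then 3*h else if t = 2 then 2*h else if t = 3 then 4*h else 2)

def fd (h k t : ℕ) : ℕ :=
  if k % 3 = 0 then d3 h t
  else if k % 3 = 1 then (if t = 0 then 1 else if t = 1 then 2*h else if t = 2 then 2*h else 1)
  else (if t = 0 then 1 else if t = 1 then h else if t = 2 then 2*h else if t = 3 then h else 1)

def CC (h k t : ℕ) : ℕ :=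
  if t < s0 k then fc h k t
  else c3 h ((t - s0 k) % 3) + d3 h ((t - s0 k) % 3) * ((t - (t - s0 k) % 3) * (2*h))

def DD (h k t : ℕ) : ℕ :=
  if t < s0 k then fd h k t else d3 h ((t - s0 k) % 3)

def g (h k t i : ℕ) : ℕ := (CC h k t + DD h k t * i) % (2*h+1)

lemma hzkey (h : ℕ) : 2*(h : ZMod (2*h+1)) + 1 = 0 := by
  have := ZMod.natCast_self (2*h+1)
  push_cast at this
  linear_combination this

lemma CC_tr {τ T : ℕ} (h1 : s0 k ≤ T) (h2 : (T - s0 k) % 3 = 0) (h3 : τ < 3) :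
    CC h k (T + τ) = c3 h τ + d3 h τ * (T * (2*h)) := by
  unfold CC
  rw [if_neg (by omega)]
  have e1 : (T + τ - s0 k) % 3 = τ := by omega
  rw [e1]
  congr 3
  omega

lemma DD_tr {τ T : ℕ} (h1 : s0 k ≤ T) (h2 : (T - s0 k) % 3 = 0) (h3 : τ < 3) :
    DD h k (T + τ) = d3 h τ := by
  unfold DD
  rw [if_neg (by omega)]
  congr 1
  omega

lemma B3row (hh : 1 ≤ h) (T x : ℕ) (h1 : s0 k ≤ T) (h2 : (T - s0 k) % 3 = 0) :
    g h k T x + g h k (T+1) x + g h k (T+2) x = 3*h := by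
  have c0 : CC h k T = h + (h+1) * (T * (2*h)) := by
    have := CC_tr (h := h) (τ := 0) (T := T) h1 h2 (by omega); simpa [c3, d3] using this
  have c1 : CC h k (T+1) = 2*h + (2*h) * (T * (2*h)) := by
    have := CC_tr (h := h) (τ := 1) (T := T) h1 h2 (by omega); simpa [c3, d3] using this
  have c2 : CC h k (T+2) = 0 + (h+1) * (T * (2*h)) := by
    have := CC_tr (h := h) (τ := 2) (T := T) h1 h2 (by omega); simpa [c3, d3] using this
  have d0 : DD h k T = h+1 := by
    have := DD_tr (h := h) (τ := 0) (T := T) h1 h2 (by omega); simpa [d3] using this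
  have d1 : DD h k (T+1) = 2*h := by
    have := DD_tr (h := h) (τ := 1) (T := T) h1 h2 (by omega); simpa [d3] using this
  have d2 : DD h k (T+2) = h+1 := by
    have := DD_tr (h := h) (τ := 2) (T := T) h1 h2 (by omega); simpa [d3] using this
  unfold g
  rw [c0, c1, c2, d0, d1, d2]
  have hz := hzkey h
  have P := triple_row (n := 2*h+1) rfl hh
      (0 + (h+1) * (T * (2*h))) (h + (h+1) * (T * (2*h))) (2*h + (2*h) * (T * (2*h)))
      (h+1) (h+1) (2*h) x
      (by push_cast; ring)
      (by push_cast; linear_combination 2 * hz)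
      (by push_cast; ring)
      (by push_cast; linear_combination (1 + 4*(h:ZMod (2*h+1))*(T:ZMod (2*h+1))) * hz)
  linarith [P]


lemma g_col (hh : 1 ≤ h) (t j : ℕ) :
    g h k t ((j + t*(2*h)) % (2*h+1)) =
      ((CC h k t + DD h k t * (t*(2*h))) + DD h k t * j) % (2*h+1) := by
  unfold g
  apply mod_eq_of_zmod
  push_cast [ZMod.natCast_mod]
  ring

lemma B3col (hh : 1 ≤ h) (T j : ℕ) (h1 : s0 k ≤ T) (h2 : (T - s0 k) % 3 = 0) :
    g h k T ((j + T*(2*h)) % (2*h+1)) + g h k (T+1) ((j + (T+1)*(2*h)) % (2*h+1))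
      + g h k (T+2) ((j + (T+2)*(2*h)) % (2*h+1)) = 3*h := by
  have c0 : CC h k T = h + (h+1) * (T * (2*h)) := by
    have := CC_tr (h := h) (τ := 0) (T := T) h1 h2 (by omega); simpa [c3, d3] using this
  have c1 : CC h k (T+1) = 2*h + (2*h) * (T * (2*h)) := by
    have := CC_tr (h := h) (τ := 1) (T := T) h1 h2 (by omega); simpa [c3, d3] using this
  have c2 : CC h k (T+2) = 0 + (h+1) * (T * (2*h)) := by
    have := CC_tr (h := h) (τ := 2) (T := T) h1 h2 (by omega); simpa [c3, d3] using this
  have d0 : DD h k T = h+1 := by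
    have := DD_tr (h := h) (τ := 0) (T := T) h1 h2 (by omega); simpa [d3] using this
  have d1 : DD h k (T+1) = 2*h := by
    have := DD_tr (h := h) (τ := 1) (T := T) h1 h2 (by omega); simpa [d3] using this
  have d2 : DD h k (T+2) = h+1 := by
    have := DD_tr (h := h) (τ := 2) (T := T) h1 h2 (by omega); simpa [d3] using this
  rw [g_col hh, g_col hh, g_col hh, c0, c1, c2, d0, d1, d2]
  have hz := hzkey h
  have P := triple_row (n := 2*h+1) rfl hh
      ((h + (h+1) * (T * (2*h))) + (h+1) * (T*(2*h)))
      ((0 + (h+1) * (T * (2*h))) + (h+1) * ((T+2)*(2*h)))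
      ((2*h + (2*h) * (T * (2*h))) + (2*h) * ((T+1)*(2*h)))
      (h+1) (h+1) (2*h) j
      (by push_cast; ring)
      (by push_cast; linear_combination 2 * hz)
      (by push_cast; linear_combination (2*(h : ZMod (2*h+1))) * hz)
      (by push_cast; linear_combination (1 + 2*(h:ZMod (2*h+1)) + 8*(T:ZMod (2*h+1))*(h:ZMod (2*h+1))) * hz)
  linarith [P]


/-! first block values -/

lemma s0_bound (hk : 3 ≤ k) : s0 k ≤ k ∧ (k - s0 k) % 3 = 0 ∧ 3 ≤ s0 k ∧ s0 k ≤ 5 := by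
  unfold s0; split_ifs <;> omega

lemma CC_lt {t : ℕ} (ht : t < s0 k) : CC h k t = fc h k t := if_pos ht
lemma DD_lt {t : ℕ} (ht : t < s0 k) : DD h k t = fd h k t := if_pos ht

/-! first block row sums -/

lemma first_row0 (hh : 1 ≤ h) (hr : k % 3 = 0) (x : ℕ) :
    ∑ t ∈ Finset.range (s0 k), g h k t x = s0 k * h := by
  have hs : s0 k = 3 := by simp [s0, hr]
  rw [hs]
  rw [Finset.sum_range_succ, Finset.sum_range_succ, Finset.sum_range_succ,
    Finset.sum_range_zero]
  have e0 : CC h k 0 = h := by rw [CC_lt (by omega)]; simp [fc, hr, c3]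
  have e1 : CC h k 1 = 2*h := by rw [CC_lt (by omega)]; simp [fc, hr, c3]
  have e2 : CC h k 2 = 0 := by rw [CC_lt (by omega)]; simp [fc, hr, c3]
  have f0 : DD h k 0 = h+1 := by rw [DD_lt (by omega)]; simp [fd, hr, d3]
  have f1 : DD h k 1 = 2*h := by rw [DD_lt (by omega)]; simp [fd, hr, d3]
  have f2 : DD h k 2 = h+1 := by rw [DD_lt (by omega)]; simp [fd, hr, d3]
  unfold g
  rw [e0, e1, e2, f0, f1, f2]
  have hz := hzkey h
  have P := triple_row (n := 2*h+1) rfl hh 0 h (2*h) (h+1) (h+1) (2*h) x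
      (by push_cast; ring)
      (by push_cast; linear_combination 2 * hz)
      (by push_cast; ring)
      (by push_cast; linear_combination hz)
  linarith [P]

lemma first_row1 (hh : 1 ≤ h) (hr : k % 3 = 1) (x : ℕ) :
    ∑ t ∈ Finset.range (s0 k), g h k t x = s0 k * h := by
  have hs : s0 k = 4 := by simp [s0, hr]
  rw [hs]
  rw [Finset.sum_range_succ, Finset.sum_range_succ, Finset.sum_range_succ,
    Finset.sum_range_succ, Finset.sum_range_zero]
  have e0 : CC h k 0 = 0 := by rw [CC_lt (by omega)]; simp [fc, hr]
  have e1 : CC h k 1 = 2*h := by rw [CC_lt (by omega)]; simp [fc, hr]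
  have e2 : CC h k 2 = 6*h := by rw [CC_lt (by omega)]; simp [fc, hr]
  have e3 : CC h k 3 = 2 := by rw [CC_lt (by omega)]; simp [fc, hr]
  have f0 : DD h k 0 = 1 := by rw [DD_lt (by omega)]; simp [fd, hr]
  have f1 : DD h k 1 = 2*h := by rw [DD_lt (by omega)]; simp [fd, hr]
  have f2 : DD h k 2 = 2*h := by rw [DD_lt (by omega)]; simp [fd, hr]
  have f3 : DD h k 3 = 1 := by rw [DD_lt (by omega)]; simp [fd, hr]
  unfold g
  rw [e0, e1, e2, e3, f0, f1, f2, f3]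
  have hz := hzkey h
  have P1 := pair_row (n := 2*h+1) (h := h) rfl 0 (2*h) 1 (2*h) x
      (by push_cast; linear_combination hz) (by push_cast; linear_combination hz)
  have P2 := pair_row (n := 2*h+1) (h := h) rfl (6*h) 2 (2*h) 1 x
      (by push_cast; linear_combination 3*hz) (by push_cast; linear_combination hz)
  omega

lemma first_row2 (hh : 1 ≤ h) (hr : k % 3 = 2) (x : ℕ) :
    ∑ t ∈ Finset.range (s0 k), g h k t x = s0 k * h := by
  have hs : s0 k = 5 := by simp [s0, hr]
  rw [hs]
  rw [Finset.sum_range_succ, Finset.sum_range_succ, Finset.sum_range_succ,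
    Finset.sum_range_succ, Finset.sum_range_succ, Finset.sum_range_zero]
  have e0 : CC h k 0 = 0 := by rw [CC_lt (by omega)]; simp [fc, hr]
  have e1 : CC h k 1 = 3*h := by rw [CC_lt (by omega)]; simp [fc, hr]
  have e2 : CC h k 2 = 2*h := by rw [CC_lt (by omega)]; simp [fc, hr]
  have e3 : CC h k 3 = 4*h := by rw [CC_lt (by omega)]; simp [fc, hr]
  have e4 : CC h k 4 = 2 := by rw [CC_lt (by omega)]; simp [fc, hr]
  have f0 : DD h k 0 = 1 := by rw [DD_lt (by omega)]; simp [fd, hr]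
  have f1 : DD h k 1 = h := by rw [DD_lt (by omega)]; simp [fd, hr]
  have f2 : DD h k 2 = 2*h := by rw [DD_lt (by omega)]; simp [fd, hr]
  have f3 : DD h k 3 = h := by rw [DD_lt (by omega)]; simp [fd, hr]
  have f4 : DD h k 4 = 1 := by rw [DD_lt (by omega)]; simp [fd, hr]
  unfold g
  rw [e0, e1, e2, e3, e4, f0, f1, f2, f3, f4]
  have hz := hzkey h
  have P1 := pair_row (n := 2*h+1) (h := h) rfl 0 (2*h) 1 (2*h) x
      (by push_cast; linear_combination hz) (by push_cast; linear_combination hz)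
  have P2 := triple_row (n := 2*h+1) rfl hh (3*h) (4*h) 2 h h 1 x
      (by push_cast; ring)
      (by push_cast; linear_combination hz)
      (by push_cast; ring)
      (by push_cast; linear_combination 3*hz)
  omega


/-! first block column sums -/

lemma first_col0 (hh : 1 ≤ h) (hr : k % 3 = 0) (j : ℕ) :
    ∑ t ∈ Finset.range (s0 k), g h k t ((j + t*(2*h)) % (2*h+1)) = s0 k * h := by
  have hs : s0 k = 3 := by simp [s0, hr]
  rw [hs]
  rw [Finset.sum_range_succ, Finset.sum_range_succ, Finset.sum_range_succ,
    Finset.sum_range_zero]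
  have e0 : CC h k 0 = h := by rw [CC_lt (by omega)]; simp [fc, hr, c3]
  have e1 : CC h k 1 = 2*h := by rw [CC_lt (by omega)]; simp [fc, hr, c3]
  have e2 : CC h k 2 = 0 := by rw [CC_lt (by omega)]; simp [fc, hr, c3]
  have f0 : DD h k 0 = h+1 := by rw [DD_lt (by omega)]; simp [fd, hr, d3]
  have f1 : DD h k 1 = 2*h := by rw [DD_lt (by omega)]; simp [fd, hr, d3]
  have f2 : DD h k 2 = h+1 := by rw [DD_lt (by omega)]; simp [fd, hr, d3]
  rw [g_col hh, g_col hh, g_col hh, e0, e1, e2, f0, f1, f2]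
  have hz := hzkey h
  have P := triple_row (n := 2*h+1) rfl hh
      (h + (h+1) * (0*(2*h))) (0 + (h+1) * (2*(2*h))) (2*h + (2*h) * (1*(2*h)))
      (h+1) (h+1) (2*h) j
      (by push_cast; ring)
      (by push_cast; linear_combination 2 * hz)
      (by push_cast; linear_combination (2*(h : ZMod (2*h+1))) * hz)
      (by push_cast; linear_combination (2*(h:ZMod (2*h+1)) + 1) * hz)
  linarith [P]

lemma first_col1 (hh : 1 ≤ h) (hr : k % 3 = 1) (j : ℕ) :
    ∑ t ∈ Finset.range (s0 k), g h k t ((j + t*(2*h)) % (2*h+1)) = s0 k * h := by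
  have hs : s0 k = 4 := by simp [s0, hr]
  rw [hs]
  rw [Finset.sum_range_succ, Finset.sum_range_succ, Finset.sum_range_succ,
    Finset.sum_range_succ, Finset.sum_range_zero]
  have e0 : CC h k 0 = 0 := by rw [CC_lt (by omega)]; simp [fc, hr]
  have e1 : CC h k 1 = 2*h := by rw [CC_lt (by omega)]; simp [fc, hr]
  have e2 : CC h k 2 = 6*h := by rw [CC_lt (by omega)]; simp [fc, hr]
  have e3 : CC h k 3 = 2 := by rw [CC_lt (by omega)]; simp [fc, hr]
  have f0 : DD h k 0 = 1 := by rw [DD_lt (by omega)]; simp [fd, hr]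
  have f1 : DD h k 1 = 2*h := by rw [DD_lt (by omega)]; simp [fd, hr]
  have f2 : DD h k 2 = 2*h := by rw [DD_lt (by omega)]; simp [fd, hr]
  have f3 : DD h k 3 = 1 := by rw [DD_lt (by omega)]; simp [fd, hr]
  rw [g_col hh, g_col hh, g_col hh, g_col hh, e0, e1, e2, e3, f0, f1, f2, f3]
  have hz := hzkey h
  have P1 := pair_row (n := 2*h+1) (h := h) rfl
      (0 + 1 * (0*(2*h))) (6*h + (2*h) * (2*(2*h))) 1 (2*h) j
      (by push_cast; linear_combination (1 + 4*(h:ZMod (2*h+1))) * hz)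
      (by push_cast; linear_combination hz)
  have P2 := pair_row (n := 2*h+1) (h := h) rfl
      (2*h + (2*h) * (1*(2*h))) (2 + 1 * (3*(2*h))) (2*h) 1 j
      (by push_cast; linear_combination (3 + 2*(h:ZMod (2*h+1))) * hz)
      (by push_cast; linear_combination hz)
  omega

lemma first_col2 (hh : 1 ≤ h) (hr : k % 3 = 2) (j : ℕ) :
    ∑ t ∈ Finset.range (s0 k), g h k t ((j + t*(2*h)) % (2*h+1)) = s0 k * h := by
  have hs : s0 k = 5 := by simp [s0, hr]
  rw [hs]
  rw [Finset.sum_range_succ, Finset.sum_range_succ, Finset.sum_range_succ,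
    Finset.sum_range_succ, Finset.sum_range_succ, Finset.sum_range_zero]
  have e0 : CC h k 0 = 0 := by rw [CC_lt (by omega)]; simp [fc, hr]
  have e1 : CC h k 1 = 3*h := by rw [CC_lt (by omega)]; simp [fc, hr]
  have e2 : CC h k 2 = 2*h := by rw [CC_lt (by omega)]; simp [fc, hr]
  have e3 : CC h k 3 = 4*h := by rw [CC_lt (by omega)]; simp [fc, hr]
  have e4 : CC h k 4 = 2 := by rw [CC_lt (by omega)]; simp [fc, hr]
  have f0 : DD h k 0 = 1 := by rw [DD_lt (by omega)]; simp [fd, hr]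
  have f1 : DD h k 1 = h := by rw [DD_lt (by omega)]; simp [fd, hr]
  have f2 : DD h k 2 = 2*h := by rw [DD_lt (by omega)]; simp [fd, hr]
  have f3 : DD h k 3 = h := by rw [DD_lt (by omega)]; simp [fd, hr]
  have f4 : DD h k 4 = 1 := by rw [DD_lt (by omega)]; simp [fd, hr]
  rw [g_col hh, g_col hh, g_col hh, g_col hh, g_col hh,
    e0, e1, e2, e3, e4, f0, f1, f2, f3, f4]
  have hz := hzkey h
  have P1 := pair_row (n := 2*h+1) (h := h) rfl
      (2*h + (2*h) * (2*(2*h))) (2 + 1 * (4*(2*h))) (2*h) 1 j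
      (by push_cast; linear_combination (3 + 4*(h:ZMod (2*h+1))) * hz)
      (by push_cast; linear_combination hz)
  have P2 := triple_row (n := 2*h+1) rfl hh
      (4*h + h * (3*(2*h))) (3*h + h * (1*(2*h))) (0 + 1 * (0*(2*h))) h h 1 j
      (by push_cast; ring)
      (by push_cast; linear_combination hz)
      (by push_cast; linear_combination (-2*(h:ZMod (2*h+1))) * hz)
      (by push_cast; linear_combination (1 + 6*(h:ZMod (2*h+1))) * hz)
  omega


/-! total sums -/

lemma row_sum (hh : 1 ≤ h) (hk : 3 ≤ k) (x : ℕ) :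
    ∑ t ∈ Finset.range k, g h k t x = k * h := by
  obtain ⟨hle, hmod, -, -⟩ := s0_bound (k := k) hk
  obtain ⟨m, hm⟩ : ∃ m, k = s0 k + 3*m := ⟨(k - s0 k)/3, by omega⟩
  have H : ∀ m', ∑ t ∈ Finset.range (s0 k + 3*m'), g h k t x = (s0 k + 3*m') * h := by
    intro m'
    induction m' with
    | zero =>
      simp only [Nat.mul_zero, Nat.add_zero]
      have h3 : k % 3 = 0 ∨ k % 3 = 1 ∨ k % 3 = 2 := by omega
      rcases h3 with hr | hr | hr
      · exact first_row0 hh hr x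
      · exact first_row1 hh hr x
      · exact first_row2 hh hr x
    | succ m ih =>
      have hstep : s0 k + 3*(m+1) = (s0 k + 3*m) + 1 + 1 + 1 := by ring
      rw [hstep, Finset.sum_range_succ, Finset.sum_range_succ, Finset.sum_range_succ, ih]
      have hB := B3row (h := h) (k := k) hh (s0 k + 3*m) x (by omega) (by omega)
      have e1 : s0 k + 3*m + 1 + 1 = s0 k + 3*m + 2 := by ring
      rw [e1] at *
      have e2 : (s0 k + 3*m + 2 + 1) * h = (s0 k + 3*m) * h + 3*h := by ring
      rw [e2]
      omega
  have := H m
  rw [← hm] at this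
  exact this

lemma col_sum (hh : 1 ≤ h) (hk : 3 ≤ k) (j : ℕ) :
    ∑ t ∈ Finset.range k, g h k t ((j + t*(2*h)) % (2*h+1)) = k * h := by
  obtain ⟨hle, hmod, -, -⟩ := s0_bound (k := k) hk
  obtain ⟨m, hm⟩ : ∃ m, k = s0 k + 3*m := ⟨(k - s0 k)/3, by omega⟩
  have H : ∀ m', ∑ t ∈ Finset.range (s0 k + 3*m'),
      g h k t ((j + t*(2*h)) % (2*h+1)) = (s0 k + 3*m') * h := by
    intro m'
    induction m' with
    | zero =>
      simp only [Nat.mul_zero, Nat.add_zero]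
      have h3 : k % 3 = 0 ∨ k % 3 = 1 ∨ k % 3 = 2 := by omega
      rcases h3 with hr | hr | hr
      · exact first_col0 hh hr j
      · exact first_col1 hh hr j
      · exact first_col2 hh hr j
    | succ m ih =>
      have hstep : s0 k + 3*(m+1) = (s0 k + 3*m) + 1 + 1 + 1 := by ring
      rw [hstep, Finset.sum_range_succ, Finset.sum_range_succ, Finset.sum_range_succ, ih]
      have hB := B3col (h := h) (k := k) hh (s0 k + 3*m) j (by omega) (by omega)
      have e1 : s0 k + 3*m + 1 + 1 = s0 k + 3*m + 2 := by ring
      rw [e1] at *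
      have e2 : (s0 k + 3*m + 2 + 1) * h = (s0 k + 3*m) * h + 3*h := by ring
      rw [e2]
      omega
  have := H m
  rw [← hm] at this
  exact this


/-! bijectivity of g t -/

lemma DD_cases (h k t : ℕ) : DD h k t = 1 ∨ DD h k t = h ∨ DD h k t = h+1 ∨ DD h k t = 2*h := by
  unfold DD fd d3
  split_ifs <;> tauto

lemma DD_unit (hh : 1 ≤ h) (t : ℕ) : IsUnit ((DD h k t : ℕ) : ZMod (2*h+1)) := by
  have hz := hzkey h
  rcases DD_cases h k t with e | e | e | e <;> rw [e]
  · simp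
  · exact IsUnit.of_mul_eq_one (-2) (by push_cast; linear_combination -hz)
  · exact IsUnit.of_mul_eq_one 2 (by push_cast; linear_combination hz)
  · exact IsUnit.of_mul_eq_one (2*(h : ZMod (2*h+1)))
      (by push_cast; linear_combination (2*(h : ZMod (2*h+1)) - 1) * hz)

lemma g_lt (hh : 1 ≤ h) (t i : ℕ) : g h k t i < 2*h+1 := Nat.mod_lt _ (by omega)

lemma g_inj (hh : 1 ≤ h) (t : ℕ) {i1 i2 : ℕ} (H1 : i1 < 2*h+1) (H2 : i2 < 2*h+1)
    (He : g h k t i1 = g h k t i2) : i1 = i2 := by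
  unfold g at He
  have hcast : ((CC h k t + DD h k t * i1 : ℕ) : ZMod (2*h+1))
      = ((CC h k t + DD h k t * i2 : ℕ) : ZMod (2*h+1)) :=
    (ZMod.natCast_eq_natCast_iff _ _ _).mpr He
  push_cast at hcast
  have h2 : (DD h k t : ZMod (2*h+1)) * i1 = (DD h k t : ZMod (2*h+1)) * i2 := by
    linear_combination hcast
  have h3 : ((i1 : ℕ) : ZMod (2*h+1)) = i2 := (DD_unit hh t).mul_left_cancel h2
  have h4 : i1 % (2*h+1) = i2 % (2*h+1) := (ZMod.natCast_eq_natCast_iff _ _ _).mp h3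
  rwa [Nat.mod_eq_of_lt H1, Nat.mod_eq_of_lt H2] at h4

lemma g_surj (hh : 1 ≤ h) (t r : ℕ) (hr : r < 2*h+1) :
    ∃ i, i < 2*h+1 ∧ g h k t i = r := by
  have hpos : 0 < 2*h+1 := by omega
  let F : Fin (2*h+1) → Fin (2*h+1) := fun i => ⟨g h k t i, g_lt hh t i⟩
  have hinj : Function.Injective F := by
    intro a b hab
    have : g h k t a = g h k t b := congrArg Fin.val hab
    exact Fin.ext (g_inj hh t a.isLt b.isLt this)
  have hsurj : Function.Surjective F := Finite.surjective_of_injective hinj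
  obtain ⟨i, hi⟩ := hsurj ⟨r, hr⟩
  exact ⟨i, i.isLt, congrArg Fin.val hi⟩


/-! the square -/

def A (h k t i : ℕ) : ℕ := (2*h+1) * t + g h k t i

def tOf (h i j : ℕ) : ℕ := ((2*h+1) + j - i) % (2*h+1)

def Msq (h k : ℕ) : Fin (2*h+1) → Fin (2*h+1) → Option ℕ :=
  fun i j => if tOf h i.val j.val < k then some (A h k (tOf h i.val j.val) i.val) else none

lemma tOf_lt (hh : 1 ≤ h) (i j : ℕ) : tOf h i j < 2*h+1 := Nat.mod_lt _ (by omega)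

lemma tOf_add (hh : 1 ≤ h) {i t : ℕ} (hi : i < 2*h+1) (ht : t < 2*h+1) :
    tOf h i ((i + t) % (2*h+1)) = t := by
  unfold tOf
  have h1 := mod_two_cases (n := 2*h+1) (x := i + t) (by omega)
  have h2 := mod_two_cases (n := 2*h+1) (x := (2*h+1) + ((i + t) % (2*h+1)) - i)
    (by split_ifs at h1 <;> omega)
  split_ifs at h1 h2 <;> omega

lemma add_tOf (hh : 1 ≤ h) {i j : ℕ} (hi : i < 2*h+1) (hj : j < 2*h+1) :
    (i + tOf h i j) % (2*h+1) = j := by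
  unfold tOf
  have h1 := mod_two_cases (n := 2*h+1) (x := (2*h+1) + j - i) (by omega)
  have h2 := mod_two_cases (n := 2*h+1) (x := i + (((2*h+1) + j - i) % (2*h+1)))
    (by split_ifs at h1 <;> omega)
  split_ifs at h1 h2 <;> omega

lemma tOf_col (hh : 1 ≤ h) {j t : ℕ} (hj : j < 2*h+1) (ht : t < 2*h+1) :
    tOf h ((j + t*(2*h)) % (2*h+1)) j = t := by
  set i := (j + t*(2*h)) % (2*h+1) with hidef
  have hi : i < 2*h+1 := Nat.mod_lt _ (by omega)
  have key : ((2*h+1) + j - i) % (2*h+1) = t % (2*h+1) := by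
    apply mod_eq_of_zmod
    have hsub : ((2*h+1) + j - i) + i = (2*h+1) + j := by omega
    have hc := congrArg (fun m : ℕ => (m : ZMod (2*h+1))) hsub
    push_cast at hc
    have hic : (i : ZMod (2*h+1)) = ((j + t*(2*h) : ℕ) : ZMod (2*h+1)) := by
      rw [hidef]; exact ZMod.natCast_mod _ _
    push_cast at hic
    have hz := hzkey h
    push_cast
    linear_combination hc - hic + (1 - (t : ZMod (2*h+1))) * hz
  unfold tOf
  rwa [Nat.mod_eq_of_lt ht] at key


lemma tOf_col_inv (hh : 1 ≤ h) {i j : ℕ} (hi : i < 2*h+1) (hj : j < 2*h+1) :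
    (j + (tOf h i j)*(2*h)) % (2*h+1) = i := by
  set t := tOf h i j with htdef
  have ht : t < 2*h+1 := tOf_lt hh i j
  have hadd : (i + t) % (2*h+1) = j := add_tOf hh hi hj
  have key : (j + t*(2*h)) % (2*h+1) = i % (2*h+1) := by
    apply mod_eq_of_zmod
    have hjc : ((j : ℕ) : ZMod (2*h+1)) = (((i + t) % (2*h+1) : ℕ) : ZMod (2*h+1)) := by
      rw [hadd]
    rw [ZMod.natCast_mod] at hjc
    push_cast at hjc ⊢
    have hz := hzkey h
    linear_combination hjc + (t : ZMod (2*h+1)) * hz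
  rwa [Nat.mod_eq_of_lt hi] at key


lemma Msq_row_sum (hh : 1 ≤ h) (hk : 3 ≤ k) (hkn : k ≤ 2*h+1) (i : Fin (2*h+1)) :
    ∑ j, (Msq h k i j).getD 0 = (2*h+1) * (∑ t ∈ Finset.range k, t) + k*h := by
  have hN : 0 < 2*h+1 := by omega
  let φ : Fin (2*h+1) → Fin (2*h+1) := fun t => ⟨(i.val + t.val) % (2*h+1), Nat.mod_lt _ hN⟩
  have hinj : Function.Injective φ := by
    intro a b hab
    have h1 : (i.val + a.val) % (2*h+1) = (i.val + b.val) % (2*h+1) := congrArg Fin.val hab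
    have h2 := tOf_add hh i.isLt a.isLt
    have h3 := tOf_add hh i.isLt b.isLt
    rw [h1] at h2
    exact Fin.ext (h2.symm.trans h3)
  have hbij : Function.Bijective φ := Finite.injective_iff_bijective.mp hinj
  have step1 : ∑ t : Fin (2*h+1), (if t.val < k then A h k t.val i.val else 0)
      = ∑ j, (Msq h k i j).getD 0 := by
    apply Fintype.sum_bijective φ hbij
    intro t
    show _ = (Msq h k i ⟨(i.val + t.val) % (2*h+1), _⟩).getD 0
    unfold Msq
    simp only
    rw [tOf_add hh i.isLt t.isLt]
    split_ifs <;> rfl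
  rw [← step1, Fin.sum_univ_eq_sum_range (fun t => if t < k then A h k t i.val else 0)]
  have step2 : ∑ t ∈ Finset.range k, (if t < k then A h k t i.val else 0)
      = ∑ t ∈ Finset.range (2*h+1), (if t < k then A h k t i.val else 0) :=
    Finset.sum_subset (Finset.range_subset_range.mpr hkn)
      (fun x _ hnx => if_neg (by simpa using hnx))
  rw [← step2]
  have step3 : ∑ t ∈ Finset.range k, (if t < k then A h k t i.val else 0)
      = ∑ t ∈ Finset.range k, A h k t i.val :=
    Finset.sum_congr rfl (fun x hx => if_pos (Finset.mem_range.mp hx))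
  rw [step3]
  unfold A
  rw [Finset.sum_add_distrib, ← Finset.mul_sum, row_sum hh hk]

lemma Msq_col_sum (hh : 1 ≤ h) (hk : 3 ≤ k) (hkn : k ≤ 2*h+1) (j : Fin (2*h+1)) :
    ∑ i, (Msq h k i j).getD 0 = (2*h+1) * (∑ t ∈ Finset.range k, t) + k*h := by
  have hN : 0 < 2*h+1 := by omega
  let φ : Fin (2*h+1) → Fin (2*h+1) := fun t => ⟨(j.val + t.val * (2*h)) % (2*h+1), Nat.mod_lt _ hN⟩
  have hinj : Function.Injective φ := by
    intro a b hab
    have h1 : (j.val + a.val * (2*h)) % (2*h+1) = (j.val + b.val * (2*h)) % (2*h+1) :=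
      congrArg Fin.val hab
    have h2 := tOf_col hh j.isLt a.isLt
    have h3 := tOf_col hh j.isLt b.isLt
    rw [h1] at h2
    exact Fin.ext (h2.symm.trans h3)
  have hbij : Function.Bijective φ := Finite.injective_iff_bijective.mp hinj
  have step1 : ∑ t : Fin (2*h+1),
      (if t.val < k then A h k t.val ((j.val + t.val * (2*h)) % (2*h+1)) else 0)
      = ∑ i, (Msq h k i j).getD 0 := by
    apply Fintype.sum_bijective φ hbij
    intro t
    show _ = (Msq h k ⟨(j.val + t.val * (2*h)) % (2*h+1), _⟩ j).getD 0
    unfold Msq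
    simp only
    rw [tOf_col hh j.isLt t.isLt]
    split_ifs <;> rfl
  rw [← step1, Fin.sum_univ_eq_sum_range
    (fun t => if t < k then A h k t ((j.val + t * (2*h)) % (2*h+1)) else 0)]
  have step2 : ∑ t ∈ Finset.range k, (if t < k then A h k t ((j.val + t * (2*h)) % (2*h+1)) else 0)
      = ∑ t ∈ Finset.range (2*h+1), (if t < k then A h k t ((j.val + t * (2*h)) % (2*h+1)) else 0) :=
    Finset.sum_subset (Finset.range_subset_range.mpr hkn)
      (fun x _ hnx => if_neg (by simpa using hnx))
  rw [← step2]
  have step3 : ∑ t ∈ Finset.range k, (if t < k then A h k t ((j.val + t * (2*h)) % (2*h+1)) else 0)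
      = ∑ t ∈ Finset.range k, A h k t ((j.val + t * (2*h)) % (2*h+1)) :=
    Finset.sum_congr rfl (fun x hx => if_pos (Finset.mem_range.mp hx))
  rw [step3]
  unfold A
  rw [Finset.sum_add_distrib, ← Finset.mul_sum, col_sum hh hk]


lemma Msq_row_card (hh : 1 ≤ h) (hkn : k ≤ 2*h+1) (i : Fin (2*h+1)) :
    (Finset.univ.filter fun j => (Msq h k i j).isSome).card = k := by
  have hN : 0 < 2*h+1 := by omega
  have key : (Finset.univ.filter fun j => (Msq h k i j).isSome).card = (Finset.range k).card := by
    apply Finset.card_bij' (fun j _ => tOf h i.val j.val)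
      (fun t ht => (⟨(i.val + t) % (2*h+1), Nat.mod_lt _ hN⟩ : Fin (2*h+1)))
    · intro a ha
      rw [Finset.mem_filter] at ha
      have := ha.2
      unfold Msq at this
      rw [Finset.mem_range]
      by_contra hc
      rw [if_neg hc] at this
      simp at this
    · intro t ht
      rw [Finset.mem_range] at ht
      rw [Finset.mem_filter]
      refine ⟨Finset.mem_univ _, ?_⟩
      unfold Msq
      simp only
      rw [tOf_add hh i.isLt (by omega : t < 2*h+1), if_pos ht]
      rfl
    · intro a ha
      exact Fin.ext (add_tOf hh i.isLt a.isLt)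
    · intro t ht
      rw [Finset.mem_range] at ht
      exact tOf_add hh i.isLt (by omega : t < 2*h+1)
  rw [key, Finset.card_range]

lemma Msq_col_card (hh : 1 ≤ h) (hkn : k ≤ 2*h+1) (j : Fin (2*h+1)) :
    (Finset.univ.filter fun i => (Msq h k i j).isSome).card = k := by
  have hN : 0 < 2*h+1 := by omega
  have key : (Finset.univ.filter fun i => (Msq h k i j).isSome).card = (Finset.range k).card := by
    apply Finset.card_bij' (fun i _ => tOf h i.val j.val)
      (fun t ht => (⟨(j.val + t * (2*h)) % (2*h+1), Nat.mod_lt _ hN⟩ : Fin (2*h+1)))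
    · intro a ha
      rw [Finset.mem_filter] at ha
      have := ha.2
      unfold Msq at this
      rw [Finset.mem_range]
      by_contra hc
      rw [if_neg hc] at this
      simp at this
    · intro t ht
      rw [Finset.mem_range] at ht
      rw [Finset.mem_filter]
      refine ⟨Finset.mem_univ _, ?_⟩
      unfold Msq
      simp only
      rw [tOf_col hh j.isLt (by omega : t < 2*h+1), if_pos ht]
      rfl
    · intro a ha
      exact Fin.ext (tOf_col_inv hh a.isLt j.isLt)
    · intro t ht
      rw [Finset.mem_range] at ht
      exact tOf_col hh j.isLt (by omega : t < 2*h+1)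
  rw [key, Finset.card_range]

lemma Msq_entry_lt (hh : 1 ≤ h) (hkn : k ≤ 2*h+1) (i j : Fin (2*h+1)) (e : ℕ)
    (he : Msq h k i j = some e) : e < k * (2*h+1) := by
  unfold Msq at he
  split_ifs at he with hc
  · have hA : A h k (tOf h i.val j.val) i.val = e := Option.some_injective _ he
    have hg := g_lt (k := k) hh (tOf h i.val j.val) i.val
    unfold A at hA
    have : (2*h+1) * (tOf h i.val j.val) + (2*h+1) ≤ (2*h+1) * k :=  by
      have := Nat.succ_le_of_lt hc
      calc (2*h+1) * (tOf h i.val j.val) + (2*h+1) = (2*h+1) * (tOf h i.val j.val + 1) := by ring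
      _ ≤ (2*h+1) * k := Nat.mul_le_mul_left _ (by omega)
    have h4 : e < (2*h+1) * k := by omega
    exact Nat.mul_comm (2*h+1) k ▸ h4

lemma Msq_exists_unique (hh : 1 ≤ h) (hk : 3 ≤ k) (hkn : k ≤ 2*h+1) (e : ℕ)
    (he : e < k * (2*h+1)) :
    ∃! p : Fin (2*h+1) × Fin (2*h+1), Msq h k p.1 p.2 = some e := by
  have hN : 0 < 2*h+1 := by omega
  set t := e / (2*h+1) with htdef
  set r := e % (2*h+1) with hrdef
  have ht : t < k := by
    rw [htdef]
    exact Nat.div_lt_of_lt_mul (Nat.mul_comm k (2*h+1) ▸ he)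
  have hr : r < 2*h+1 := Nat.mod_lt _ hN
  have her : e = (2*h+1) * t + r := by
    rw [htdef, hrdef]
    exact (Nat.div_add_mod e (2*h+1)).symm
  obtain ⟨iv, hiv, hgiv⟩ := g_surj (k := k) hh t r hr
  refine ⟨(⟨iv, hiv⟩, ⟨(iv + t) % (2*h+1), Nat.mod_lt _ hN⟩), ?_, ?_⟩
  · show Msq h k _ _ = some e
    unfold Msq
    simp only
    rw [tOf_add hh hiv (by omega : t < 2*h+1), if_pos ht]
    unfold A
    rw [hgiv, ← her]
  · rintro ⟨i', j'⟩ hp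
    unfold Msq at hp
    split_ifs at hp with hc
    · have hA : A h k (tOf h i'.val j'.val) i'.val = e := Option.some_injective _ hp
      unfold A at hA
      have hglt := g_lt (k := k) hh (tOf h i'.val j'.val) i'.val
      -- t and r recovery
      have ht' : tOf h i'.val j'.val = t := by
        have h5 : e / (2*h+1) = tOf h i'.val j'.val := by
          rw [← hA, Nat.mul_add_div hN, Nat.div_eq_of_lt hglt]
          omega
        rw [htdef, h5]
      have hr' : g h k t i'.val = r := by
        rw [← ht']
        have h6 : e % (2*h+1) = g h k (tOf h i'.val j'.val) i'.val := by
          rw [← hA, Nat.mul_add_mod, Nat.mod_eq_of_lt hglt]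
        rw [hrdef, h6]
      have hi' : i'.val = iv := g_inj hh t i'.isLt hiv (by rw [hgiv, hr'])
      have hj' : j'.val = (iv + t) % (2*h+1) := by
        rw [← hi', ← ht']
        exact (add_tOf hh i'.isLt j'.isLt).symm
      exact Prod.ext (Fin.ext hi') (Fin.ext hj')


end DMagic

/-- An `n × n` partially filled array with entries `0,…,k*n-1` each occurring exactly once,
exactly `k` filled cells in each row and each column, and every row sum and column sum
equal to `S`. -/
def IsMagicWithSum (n k S : ℕ) (M : Fin n → Fin n → Option ℕ) : Prop :=
  (∀ e < k * n, ∃! p : Fin n × Fin n, M p.1 p.2 = some e) ∧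
  (∀ i j : Fin n, ∀ e, M i j = some e → e < k * n) ∧
  (∀ i : Fin n, (Finset.univ.filter fun j => (M i j).isSome).card = k) ∧
  (∀ j : Fin n, (Finset.univ.filter fun i => (M i j).isSome).card = k) ∧
  (∀ i : Fin n, ∑ j, (M i j).getD 0 = S) ∧
  (∀ j : Fin n, ∑ i, (M i j).getD 0 = S)

/-- A `k`-magic square of order `n`: some common magic sum works. -/
def IsKMagic (n k : ℕ) (M : Fin n → Fin n → Option ℕ) : Prop :=
  ∃ S, IsMagicWithSum n k S M

/-- All filled cells lie on `k` consecutive broken diagonals, i.e. there is a shift `d`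
such that every filled cell `(i, j)` satisfies `j = (i + d + t) % n` for some `t < k`. -/
def IsKDiagonal (n k : ℕ) (M : Fin n → Fin n → Option ℕ) : Prop :=
  ∃ d : ℕ, ∀ i j : Fin n, (M i j).isSome → ∃ t < k, (j : ℕ) = ((i : ℕ) + d + t) % n

/-- A `k`-diagonal magic square of order `n`. -/
def IsDiagonalMagic (n k : ℕ) (M : Fin n → Fin n → Option ℕ) : Prop :=
  IsKMagic n k M ∧ IsKDiagonal n k M

theorem diagonal_magic_odd_order (n k : ℕ) (hno : Odd n) (hk : 3 ≤ k) (hkn : k ≤ n) :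
    ∃ M : Fin n → Fin n → Option ℕ, IsDiagonalMagic n k M := by
  obtain ⟨h, rfl⟩ := hno
  have hh : 1 ≤ h := by omega
  refine ⟨DMagic.Msq h k, ⟨⟨(2*h+1) * (∑ t ∈ Finset.range k, t) + k*h,
    fun e he => DMagic.Msq_exists_unique hh hk hkn e he,
    fun i j e he => DMagic.Msq_entry_lt hh hkn i j e he,
    fun i => DMagic.Msq_row_card hh hkn i,
    fun j => DMagic.Msq_col_card hh hkn j,
    fun i => DMagic.Msq_row_sum hh hk hkn i,
    fun j => DMagic.Msq_col_sum hh hk hkn j⟩, ?_⟩⟩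
  refine ⟨0, fun i j hsome => ?_⟩
  unfold DMagic.Msq at hsome
  by_cases hc : DMagic.tOf h i.val j.val < k
  · refine ⟨DMagic.tOf h i.val j.val, hc, ?_⟩
    have := DMagic.add_tOf hh i.isLt j.isLt
    simpa using this.symm
  · rw [if_neg hc] at hsome
    simp at hsome
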